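/- The limit lim_{t → 0⁺} t · Σ_{a=1}^∞ sech((a + 1/2)·t) exists and equals π/2, where sech(u) = 1/cosh(u) and the series converges for every t > 0. -/

import Mathlib

open Filter

noncomputable def gud (x : ℝ) : ℝ := Real.arctan (Real.sinh x)

lemma gud_hasDerivAt (x : ℝ) : HasDerivAt gud (1 / Real.cosh x) x := by
  have h : HasDerivAt gud (1 / (1 + Real.sinh x ^ 2) * Real.cosh x) x :=
    (Real.hasDerivAt_arctan (Real.sinh x)).comp x (Real.hasDerivAt_sinh x)
  convert h using 1
  have hc := Real.cosh_pos x
  have hsq : Real.cosh x ^ 2 = Real.sinh x ^ 2 + 1 := Real.cosh_sq x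
  field_simp
  nlinarith [hsq]

lemma gud_continuous : Continuous gud :=
  Real.continuous_arctan.comp Real.continuous_sinh

lemma gud_lt_pi_div_two (x : ℝ) : gud x < Real.pi / 2 :=
  Real.arctan_lt_pi_div_two _

lemma gud_mvt {a b : ℝ} (h0 : 0 ≤ a) (hab : a < b) :
    (b - a) * (1 / Real.cosh b) ≤ gud b - gud a ∧
      gud b - gud a ≤ (b - a) * (1 / Real.cosh a) := by
  obtain ⟨c, hc, hslope⟩ := exists_hasDerivAt_eq_slope gud (fun x => 1 / Real.cosh x) hab
    (fun x _ => (gud_hasDerivAt x).continuousAt.continuousWithinAt)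
    (fun x _ => gud_hasDerivAt x)
  have hba : 0 < b - a := sub_pos.2 hab
  have heq : gud b - gud a = (b - a) * (1 / Real.cosh c) := by
    rw [hslope]; field_simp
  have hc0 : 0 ≤ c := h0.trans hc.1.le
  have hca : Real.cosh a ≤ Real.cosh c := by
    rw [Real.cosh_le_cosh, abs_of_nonneg h0, abs_of_nonneg hc0]; exact hc.1.le
  have hcb : Real.cosh c ≤ Real.cosh b := by
    rw [Real.cosh_le_cosh, abs_of_nonneg hc0, abs_of_nonneg (h0.trans hab.le)]
    exact hc.2.le
  have hb' := Real.cosh_pos b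
  have ha' := Real.cosh_pos a
  have hc' := Real.cosh_pos c
  constructor
  · rw [heq]
    have := one_div_le_one_div_of_le hc' hcb
    nlinarith
  · rw [heq]
    have := one_div_le_one_div_of_le ha' hca
    nlinarith

lemma tendsto_gud_atTop : Tendsto gud atTop (nhds (Real.pi / 2)) := by
  have hsinh : Tendsto Real.sinh atTop atTop := by
    refine tendsto_atTop_mono' atTop ?_ tendsto_id
    filter_upwards [eventually_gt_atTop (0:ℝ)] with x hx
    exact (Real.self_lt_sinh_iff.2 hx).le
  exact (Real.tendsto_arctan_atTop.mono_right nhdsWithin_le_nhds).comp hsinh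

lemma sech_mono_arg {a : ℕ} (t : ℝ) :
    ((((a : ℝ) + 1) + 1/2) * t) = ((a : ℝ) + 3/2) * t := by ring

lemma mySummable (t : ℝ) (ht : 0 < t) :
    Summable fun a : ℕ => 1 / Real.cosh ((((a : ℝ) + 1) + 1/2) * t) := by
  have hgeo : Summable fun a : ℕ => (2 * Real.exp (-(3/2 * t))) * Real.exp (-t) ^ a :=
    (summable_geometric_of_lt_one (Real.exp_nonneg _)
      (Real.exp_lt_one_iff.2 (by linarith))).mul_left _
  apply Summable.of_nonneg_of_le (fun a => by positivity) _ hgeo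
  intro a
  rw [sech_mono_arg]
  have hcosh : Real.exp (((a : ℝ) + 3/2) * t) / 2 ≤ Real.cosh (((a : ℝ) + 3/2) * t) := by
    rw [Real.cosh_eq]
    have := Real.exp_pos (-(((a : ℝ) + 3/2) * t))
    linarith
  have hpos : (0:ℝ) < Real.exp (((a : ℝ) + 3/2) * t) / 2 := by positivity
  calc 1 / Real.cosh (((a : ℝ) + 3/2) * t)
      ≤ 1 / (Real.exp (((a : ℝ) + 3/2) * t) / 2) :=
        one_div_le_one_div_of_le hpos hcosh
    _ = 2 * Real.exp (-(((a : ℝ) + 3/2) * t)) := by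
        rw [one_div_div, Real.exp_neg, div_eq_mul_inv]
    _ = 2 * Real.exp (-(3/2 * t)) * Real.exp (-t) ^ a := by
        rw [← Real.exp_nat_mul, mul_assoc, ← Real.exp_add]
        congr 1
        ring

lemma sandwich (t : ℝ) (ht : 0 < t) :
    Real.pi / 2 - gud (3/2 * t) ≤
      t * ∑' a : ℕ, 1 / Real.cosh ((((a : ℝ) + 1) + 1/2) * t) ∧
    t * ∑' a : ℕ, 1 / Real.cosh ((((a : ℝ) + 1) + 1/2) * t) ≤
      Real.pi / 2 - gud (t / 2) := by
  set f : ℕ → ℝ := fun a => 1 / Real.cosh ((((a : ℝ) + 1) + 1/2) * t) with hf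
  have hS : HasSum (fun a => t * f a) (t * ∑' a, f a) := ((mySummable t ht).hasSum).mul_left t
  have hpart := hS.tendsto_sum_nat
  constructor
  · -- lower bound
    have hlow : ∀ n : ℕ, gud (((n : ℝ) + 3/2) * t) - gud (3/2 * t) ≤
        ∑ a ∈ Finset.range n, t * f a := by
      intro n
      have htel := Finset.sum_range_sub (fun a : ℕ => gud (((a : ℝ) + 3/2) * t)) n
      push_cast at htel
      have h32 : ((0:ℝ) + 3/2) * t = 3/2 * t := by ring
      rw [h32] at htel
      rw [← htel]
      apply Finset.sum_le_sum
      intro a _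
      have h0 : (0:ℝ) ≤ ((a:ℝ) + 3/2) * t := by positivity
      have hab : ((a:ℝ) + 3/2) * t < (((a:ℝ)+1) + 3/2) * t := by nlinarith
      have hm := (gud_mvt h0 hab).2
      have hdiff : (((a:ℝ)+1) + 3/2) * t - ((a:ℝ) + 3/2) * t = t := by ring
      rw [hdiff] at hm
      have hfx : t * f a = t * (1 / Real.cosh (((a:ℝ) + 3/2) * t)) := by
        simp only [hf, sech_mono_arg]
      rw [hfx]
      exact hm
    have hLHS : Tendsto (fun n : ℕ => gud (((n : ℝ) + 3/2) * t) - gud (3/2 * t)) atTop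
        (nhds (Real.pi / 2 - gud (3/2 * t))) := by
      apply Tendsto.sub_const
      apply tendsto_gud_atTop.comp
      apply Tendsto.atTop_mul_const ht
      exact tendsto_natCast_atTop_atTop.atTop_add tendsto_const_nhds
    exact le_of_tendsto_of_tendsto' hLHS hpart hlow
  · -- upper bound
    have hup : ∀ n : ℕ, ∑ a ∈ Finset.range n, t * f a ≤ Real.pi / 2 - gud (t / 2) := by
      intro n
      have htel := Finset.sum_range_sub (fun a : ℕ => gud (((a : ℝ) + 1/2) * t)) n
      push_cast at htel
      have h12 : ((0:ℝ) + 1/2) * t = t / 2 := by ring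
      rw [h12] at htel
      calc ∑ a ∈ Finset.range n, t * f a
          ≤ ∑ a ∈ Finset.range n,
              (gud ((((a:ℝ)+1) + 1/2) * t) - gud (((a:ℝ) + 1/2) * t)) := by
            apply Finset.sum_le_sum
            intro a _
            have h0 : (0:ℝ) ≤ ((a:ℝ) + 1/2) * t := by positivity
            have hab : ((a:ℝ) + 1/2) * t < (((a:ℝ)+1) + 1/2) * t := by nlinarith
            have hm := (gud_mvt h0 hab).1
            have hdiff : (((a:ℝ)+1) + 1/2) * t - ((a:ℝ) + 1/2) * t = t := by ring
            rw [hdiff] at hm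
            exact hm
        _ = gud (((n : ℝ) + 1/2) * t) - gud (t / 2) := htel
        _ ≤ Real.pi / 2 - gud (t / 2) := by
            have := gud_lt_pi_div_two (((n : ℝ) + 1/2) * t)
            linarith
    exact le_of_tendsto' hpart hup

/-- For every `t > 0` the series `Σ_{a=1}^∞ sech((a + 1/2) t)` converges, and
`t · Σ_{a=1}^∞ sech((a + 1/2) t) → π/2` as `t → 0⁺` (the index `a : ℕ` below corresponds
to `a + 1 ≥ 1`, and `sech u = 1 / cosh u`). -/
theorem statement17 :
    (∀ t : ℝ, 0 < t →
      Summable fun a : ℕ => 1 / Real.cosh ((((a : ℝ) + 1) + 1/2) * t)) ∧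
    Tendsto (fun t : ℝ => t * ∑' a : ℕ, 1 / Real.cosh ((((a : ℝ) + 1) + 1/2) * t))
      (nhdsWithin 0 (Set.Ioi 0)) (nhds (Real.pi / 2)) := by
  refine ⟨fun t ht => mySummable t ht, ?_⟩
  have hL : Tendsto (fun t : ℝ => Real.pi / 2 - gud (3/2 * t)) (nhdsWithin 0 (Set.Ioi 0))
      (nhds (Real.pi / 2)) := by
    have h1 : Tendsto (fun t : ℝ => gud (3/2 * t)) (nhds 0) (nhds 0) :=
      (gud_continuous.comp (by continuity)).tendsto' 0 0 (by simp [gud])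
    have h3 := (tendsto_const_nhds (x := Real.pi / 2)
      (f := nhdsWithin (0:ℝ) (Set.Ioi 0))).sub (h1.mono_left nhdsWithin_le_nhds)
    simpa using h3
  have hU : Tendsto (fun t : ℝ => Real.pi / 2 - gud (t / 2)) (nhdsWithin 0 (Set.Ioi 0))
      (nhds (Real.pi / 2)) := by
    have h1 : Tendsto (fun t : ℝ => gud (t / 2)) (nhds 0) (nhds 0) :=
      (gud_continuous.comp (by continuity)).tendsto' 0 0 (by simp [gud])
    have h3 := (tendsto_const_nhds (x := Real.pi / 2)
      (f := nhdsWithin (0:ℝ) (Set.Ioi 0))).sub (h1.mono_left nhdsWithin_le_nhds)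
    simpa using h3
  apply tendsto_of_tendsto_of_tendsto_of_le_of_le' hL hU
  · filter_upwards [self_mem_nhdsWithin] with t ht
    exact (sandwich t ht).1
  · filter_upwards [self_mem_nhdsWithin] with t ht
    exact (sandwich t ht).2
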